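/- Let A, Q, P* be n×n real matrices with P* invertible and Aᵀ P* + P* A + Q = 0 (the Lyapunov equation). Let P : ℝ → Matrix (Fin n) (Fin n) ℝ be such that for every t ∈ ℝ, P has derivative Aᵀ P(t) + P(t) A + Q at t (HasDerivAt, with the matrix space as a normed space). Then the real-valued function V(t) := tr(P*⁻¹ (P(t) − P*) P*⁻¹ (P(t) − P*)) has derivative −2 tr(P*⁻¹ (P(t) − P*) P*⁻¹ Q P*⁻¹ (P(t) − P*)) at every t ∈ ℝ. -/

import Mathlib

open Matrix
open scoped Matrix.Norms.L2Operator

/-- Lemma 2: along any solution of the differential Lyapunov equation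
`Ṗ = Aᵀ P + P A + Q`, the Lyapunov function
`V(t) = tr(P*⁻¹ (P(t) − P*) P*⁻¹ (P(t) − P*))` has derivative
`−2 tr(P*⁻¹ (P(t) − P*) P*⁻¹ Q P*⁻¹ (P(t) − P*))`. -/
theorem lyapunov_dissipation_rate {n : ℕ}
    (A Q Pstar : Matrix (Fin n) (Fin n) ℝ)
    (hPinv : IsUnit Pstar)
    (hLyap : Aᵀ * Pstar + Pstar * A + Q = 0)
    (P : ℝ → Matrix (Fin n) (Fin n) ℝ)
    (hP : ∀ t : ℝ, HasDerivAt P (Aᵀ * P t + P t * A + Q) t) :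
    ∀ t : ℝ,
      HasDerivAt
        (fun s => (Pstar⁻¹ * (P s - Pstar) * Pstar⁻¹ * (P s - Pstar)).trace)
        (-2 * (Pstar⁻¹ * (P t - Pstar) * Pstar⁻¹ * Q * Pstar⁻¹ * (P t - Pstar)).trace)
        t := by
  intro t
  haveI := hPinv.invertible
  set E := Pstar⁻¹ with hE
  have h2 : ∀ M : Matrix (Fin n) (Fin n) ℝ, Pstar * (E * M) = M := fun M => by
    rw [← mul_assoc, mul_inv_of_invertible, one_mul]
  have h3 : ∀ M : Matrix (Fin n) (Fin n) ℝ, E * (Pstar * M) = M := fun M => by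
    rw [← mul_assoc, inv_mul_of_invertible, one_mul]
  have hQ : Q = -(Aᵀ * Pstar + Pstar * A) := by
    rw [eq_neg_iff_add_eq_zero, add_comm]; exact hLyap
  set X : Matrix (Fin n) (Fin n) ℝ := P t - Pstar with hXdef
  have hX : HasDerivAt (fun s => P s - Pstar) (Aᵀ * X + X * A) t := by
    have h := (hP t).sub_const Pstar
    have : Aᵀ * P t + P t * A + Q = Aᵀ * X + X * A := by
      rw [hQ, hXdef]; noncomm_ring
    rwa [this] at h
  set X' := Aᵀ * X + X * A with hX'
  have hf : HasDerivAt (fun s => E * (P s - Pstar) * E * (P s - Pstar))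
      (E * X' * E * X + E * X * E * X') t :=
    ((hX.const_mul E).mul_const E).mul hX
  set L : Matrix (Fin n) (Fin n) ℝ →L[ℝ] ℝ :=
    LinearMap.toContinuousLinearMap (Matrix.traceLinearMap (Fin n) ℝ ℝ) with hL
  have hcomp := L.hasFDerivAt.comp_hasDerivAt t hf
  simp only [hL, Function.comp_def, LinearMap.coe_toContinuousLinearMap',
    Matrix.traceLinearMap_apply] at hcomp
  have heq : (E * X' * E * X + E * X * E * X').trace
      = -2 * (E * X * E * Q * E * X).trace := by
    rw [hX', hQ]
    simp only [mul_add, add_mul, mul_neg, neg_mul, trace_add, trace_neg, mul_assoc, h2, h3]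
    have e1 : (E*(Aᵀ*(X*(E*X)))).trace = (E*(X*(E*(Aᵀ*X)))).trace := by
      rw [show E*(Aᵀ*(X*(E*X))) = (E*Aᵀ)*(X*(E*X)) by noncomm_ring,
        show E*(X*(E*(Aᵀ*X))) = (E*(X*(E*Aᵀ)))*X by noncomm_ring,
        trace_mul_comm, trace_mul_comm (E*(X*(E*Aᵀ))) X]
      congr 1; noncomm_ring
    have e2 : (E*(X*(A*(E*X)))).trace = (E*(X*(E*(X*A)))).trace := by
      rw [show E*(X*(A*(E*X))) = (E*(X*A))*(E*X) by noncomm_ring, trace_mul_comm]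
      congr 1; noncomm_ring
    linarith [e1, e2]
  rwa [heq] at hcomp
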